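/- Let r = (R_j)_{j≥1} be a generic sequence of radii. For every c ∈ C(r): (1) every z ∈ ℂ_p with f_c(z) = z lies in B_0 ∪ ⋃_{j≥1} B_j; and (2) for each j ≥ 1 there is exactly one point w ∈ ℂ_p with |w − c_j| < R_j and f_c(w) = w, and this fixed point is repelling with multiplier of absolute value |f_c'(w)| = φ(R_j)/R_j > 1. -/

import Mathlib

noncomputable section

/-- `K` is a model of `ℂ_p`, the completion of an algebraic closure of `ℚ_p`:
it is a complete, algebraically closed, nonarchimedean normed field whose norm
extends the `p`-adic absolute value and in which the algebraic elements over
`ℚ_p` are dense. -/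
structure IsCp (p : ℕ) [Fact p.Prime] (K : Type*) [NormedField K] [Algebra ℚ_[p] K] : Prop where
  complete : CompleteSpace K
  norm_extends : ∀ x : ℚ_[p], ‖algebraMap ℚ_[p] K x‖ = ‖x‖
  isAlgClosed : IsAlgClosed K
  dense_algebraic : Dense {x : K | IsAlgebraic ℚ_[p] x}
  isNonarch : ∀ x y : K, ‖x + y‖ ≤ max ‖x‖ ‖y‖

/-- `ϱ = p^{-1/(p-1)}`. -/
def rho (p : ℕ) : ℝ := (p : ℝ) ^ (-1 / ((p : ℝ) - 1))

/-- `R` is a sequence of radii: strictly increasing (for indices `≥ 1`),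
with `R 1 > p`, tending to infinity. -/
def IsRadii (p : ℕ) (R : ℕ → ℝ) : Prop :=
  (∀ j, 1 ≤ j → R j < R (j + 1)) ∧ (p : ℝ) < R 1 ∧
    Filter.Tendsto R Filter.atTop Filter.atTop

/-- The piecewise-monomial map `φ`: for `R_{j-1} < t ≤ R_j` (with `R_0 := 0`),
`φ(t) = p (R_1 ⋯ R_{j-1})⁻¹ t^{p+j-1}`. -/
def phi (p : ℕ) (R : ℕ → ℝ) (t : ℝ) : ℝ :=
  let j := sInf {j : ℕ | 1 ≤ j ∧ t ≤ R j}
  (p : ℝ) * (∏ i ∈ Finset.Icc 1 (j - 1), R i)⁻¹ * t ^ (p + j - 1)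

/-- A generic sequence of radii. -/
def IsGenericRadii (p : ℕ) (R : ℕ → ℝ) : Prop :=
  IsRadii p R ∧ ∀ i j n : ℕ, 1 ≤ i → i < j → 1 ≤ n → (phi p R)^[n] (R i) ≠ R j

/-- Membership in the parameter space `C(r)`: `|c_j| = R_j` for all `j ≥ 1`. -/
def InC (p : ℕ) [Fact p.Prime] {K : Type*} [NormedField K] (R : ℕ → ℝ) (c : ℕ → K) : Prop :=
  ∀ j, 1 ≤ j → ‖c j‖ = R j

/-- The transcendental entire map `f_c(z) = (z^p/p) ∏_{j ≥ 1} (1 - z/c_j)`. -/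
def fc (p : ℕ) {K : Type*} [NormedField K] (c : ℕ → K) (z : K) : K :=
  z ^ p / (p : K) * ∏' j : ℕ, (1 - z / c (j + 1))

/-- The disk `B_0 = {|z| < 1}` for `j = 0`, and `B_j = {|z - c_j| < R_j}` for `j ≥ 1`. -/
def Bset {K : Type*} [NormedField K] (R : ℕ → ℝ) (c : ℕ → K) (j : ℕ) : Set K :=
  if j = 0 then {z : K | ‖z‖ < 1} else {z : K | ‖z - c j‖ < R j}

/-- The set `A`, complement of all the disks `B_j`, `j ≥ 0`. -/
def Aset {K : Type*} [NormedField K] (R : ℕ → ℝ) (c : ℕ → K) : Set K :=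
  (⋃ j, Bset R c j)ᶜ

/-- `n_j`, the minimal `n ≥ 1` with `R_j < φ^{∘(n+1)}(1)`. -/
def nseq (p : ℕ) (R : ℕ → ℝ) (j : ℕ) : ℕ :=
  sInf {n : ℕ | 1 ≤ n ∧ R j < (phi p R)^[n + 1] 1}

/-- `S_j = φ⁻¹(R_j)`. -/
def Sse (p : ℕ) (R : ℕ → ℝ) (j : ℕ) : ℝ := Function.invFun (phi p R) (R j)

/-- `λ_j = φ(R_j)/R_j`. -/
def lam (p : ℕ) (R : ℕ → ℝ) (j : ℕ) : ℝ := phi p R (R j) / R j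

/-- `L_k`: index of the first symbol of the `k`-th block `B_0^{m_k} A^{n_k} B_k^{…}`
of the itinerary `α(m, ℓ)`; `L_1 = 0` and `L_{k+1} = L_k + m_k + n_k + ℓ_{k+1}`. -/
def Lseq (m n l : ℕ → ℕ) : ℕ → ℕ
  | 0 => 0
  | 1 => 0
  | k + 2 => Lseq m n l (k + 1) + m (k + 1) + n (k + 1) + l (k + 2)

/-- `N_k = L_k + m_k + n_k`, the index of the final symbol `B_k` of the truncated
itinerary `α^{(k)}` (so `α^{(k)}` has length `N_k + 1`). -/
def Nseq (m n l : ℕ → ℕ) (k : ℕ) : ℕ := Lseq m n l k + m k + n k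

/-- The symbol (`some 0 = B_0`, `none = A`, `some k = B_k`) at position `i` of the
itinerary `α(m,ℓ) = B_0^{m_1} A^{n_1} B_1^{ℓ_2} B_0^{m_2} A^{n_2} B_2^{ℓ_3} ⋯`. -/
def itin (m n l : ℕ → ℕ) (i : ℕ) : Option ℕ :=
  let k := sSup {k : ℕ | 1 ≤ k ∧ Lseq m n l k ≤ i}
  if i < Lseq m n l k + m k then some 0
  else if i < Lseq m n l k + m k + n k then none
  else some k

/-- The subset of `ℂ_p` corresponding to a symbol of the alphabet `{A, B_0, B_1, …}`. -/
def symbSet {K : Type*} [NormedField K] (R : ℕ → ℝ) (c : ℕ → K) : Option ℕ → Set K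
  | none => Aset R c
  | some j => Bset R c j

/-- Condition (3.2) at `k`: `ϱ⁻¹ R_k p^{-m_k} λ_k^{ℓ_{k+1}} < 1`. -/
def Cond32 (p : ℕ) (R : ℕ → ℝ) (m l : ℕ → ℕ) (k : ℕ) : Prop :=
  (rho p)⁻¹ * R k * ((p : ℝ) ^ m k)⁻¹ * lam p R k ^ l (k + 1) < 1

/-- Condition (3.3) for `k`: for all `2 ≤ j < k`,
`ε_k < ϱ^{k-j} R_k² (R_{j-1} S_{j-1})⁻¹ λ_{j-1}^{-ℓ_j}`. -/
def Cond33 (p : ℕ) (R : ℕ → ℝ) (ε : ℕ → ℝ) (l : ℕ → ℕ) (k : ℕ) : Prop :=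
  ∀ j, 2 ≤ j → j < k →
    ε k < rho p ^ (k - j) * R k ^ 2 * (R (j - 1) * Sse p R (j - 1))⁻¹ *
      (lam p R (j - 1) ^ l j)⁻¹

/-- Condition (3.4) for `k`: for all `2 ≤ j ≤ k`,
`ϱ^{-2} R_{j-1} S_{j-1} λ_{j-1}^{ℓ_j} p^{-m_j} < 1`. -/
def Cond34 (p : ℕ) (R : ℕ → ℝ) (m l : ℕ → ℕ) (k : ℕ) : Prop :=
  ∀ j, 2 ≤ j → j ≤ k →
    ((rho p) ^ 2)⁻¹ * (R (j - 1) * Sse p R (j - 1)) * lam p R (j - 1) ^ l j *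
      ((p : ℝ) ^ m j)⁻¹ < 1

/-- Condition (3.5) at `k`: `p ϱ⁻¹ R_{k+1}² S_k⁻¹ λ_k^{-ℓ_{k+1}} < ε_{k+1}`. -/
def Cond35 (p : ℕ) (R : ℕ → ℝ) (ε : ℕ → ℝ) (l : ℕ → ℕ) (k : ℕ) : Prop :=
  (p : ℝ) * (rho p)⁻¹ * R (k + 1) ^ 2 * (Sse p R k)⁻¹ * (lam p R k ^ l (k + 1))⁻¹ < ε (k + 1)

/-- `c' ∈ Δ_k(c, ε)`. -/
def InDelta (p : ℕ) [Fact p.Prime] {K : Type*} [NormedField K] (R : ℕ → ℝ) (c : ℕ → K)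
    (ε : ℕ → ℝ) (k : ℕ) (c' : ℕ → K) : Prop :=
  InC p R c' ∧ (∀ j, 1 ≤ j → j < k → c' j = c j) ∧ ∀ j, k ≤ j → ‖c' j - c j‖ < ε j

/-- `c' ∈ U_k(c, ε)`. -/
def InU (p : ℕ) [Fact p.Prime] {K : Type*} [NormedField K] (R : ℕ → ℝ) (c : ℕ → K)
    (k : ℕ) (ε : ℝ) (c' : ℕ → K) : Prop :=
  InC p R c' ∧ ‖c' k - c k‖ < ε ∧ ∀ j, 1 ≤ j → j ≠ k → c' j = c j

open Finset Filter Topology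
section NA
variable {K : Type*} [NormedField K]

lemma na_add_eq (hna : ∀ x y : K, ‖x + y‖ ≤ max ‖x‖ ‖y‖) {x y : K} (h : ‖x‖ < ‖y‖) :
    ‖x + y‖ = ‖y‖ := by
  refine le_antisymm ((hna x y).trans (by simp [h.le])) ?_
  have h2 : ‖y‖ ≤ max ‖x + y‖ ‖x‖ := by
    calc ‖y‖ = ‖x + y + -x‖ := by ring_nf
    _ ≤ max ‖x + y‖ ‖-x‖ := hna _ _
    _ = max ‖x + y‖ ‖x‖ := by rw [norm_neg]
  rcases max_cases ‖x + y‖ ‖x‖ with ⟨he, _⟩ | ⟨he, _⟩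
  · exact he ▸ h2
  · exact absurd (he ▸ h2) h.not_ge

lemma na_sub_le (hna : ∀ x y : K, ‖x + y‖ ≤ max ‖x‖ ‖y‖) (x y : K) :
    ‖x - y‖ ≤ max ‖x‖ ‖y‖ := by
  simpa [sub_eq_add_neg] using hna x (-y)

lemma na_sub3 (hna : ∀ x y : K, ‖x + y‖ ≤ max ‖x‖ ‖y‖) (x y z : K) :
    ‖x - z‖ ≤ max ‖x - y‖ ‖y - z‖ := by
  simpa using hna (x - y) (y - z)

lemma na_one_sub (hna : ∀ x y : K, ‖x + y‖ ≤ max ‖x‖ ‖y‖) {x : K} (h : ‖x - 1‖ < 1) :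
    ‖x‖ = 1 := by
  have := na_add_eq hna (x := x - 1) (y := 1) (by simpa using h)
  simpa using this

lemma na_prod_sub_one (hna : ∀ x y : K, ‖x + y‖ ≤ max ‖x‖ ‖y‖) {δ : ℝ} (hδ0 : 0 ≤ δ)
    (hδ1 : δ ≤ 1) {ι : Type*} (S : Finset ι) (h : ι → K) (hS : ∀ i ∈ S, ‖h i - 1‖ ≤ δ) :
    ‖(∏ i ∈ S, h i) - 1‖ ≤ δ := by
  classical
  induction S using Finset.induction_on with
  | empty => simpa using hδ0
  | @insert a s ha ih =>
    have hmem : ∀ i ∈ s, ‖h i - 1‖ ≤ δ := fun i hi => hS i (mem_insert_of_mem hi)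
    have ihs := ih hmem
    have hsn : ‖(∏ i ∈ s, h i)‖ ≤ 1 := by
      have h3 := na_sub3 hna (∏ i ∈ s, h i) 1 0
      simp only [sub_zero] at h3
      refine h3.trans (max_le ?_ (by simp))
      simpa using ihs.trans hδ1
    rw [Finset.prod_insert ha]
    have key : h a * ∏ i ∈ s, h i - 1
        = (h a - 1) * ∏ i ∈ s, h i + ((∏ i ∈ s, h i) - 1) := by ring
    rw [key]
    refine (hna _ _).trans (max_le ?_ ihs)
    rw [norm_mul]
    calc ‖h a - 1‖ * ‖∏ i ∈ s, h i‖ ≤ δ * 1 :=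
      mul_le_mul (hS a (mem_insert_self a s)) hsn (norm_nonneg _) hδ0
    _ = δ := mul_one δ

lemma na_prod_le_one (hna : ∀ x y : K, ‖x + y‖ ≤ max ‖x‖ ‖y‖) {δ : ℝ} (hδ0 : 0 ≤ δ)
    (hδ1 : δ ≤ 1) {ι : Type*} (S : Finset ι) (h : ι → K) (hS : ∀ i ∈ S, ‖h i - 1‖ ≤ δ) :
    ‖∏ i ∈ S, h i‖ ≤ 1 := by
  have h1 := na_prod_sub_one hna hδ0 hδ1 S h hS
  have h3 := na_sub3 hna (∏ i ∈ S, h i) 1 0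
  simp only [sub_zero] at h3
  refine h3.trans (max_le ?_ (by simp))
  simpa using h1.trans hδ1

/-- Ultrametric Cauchy criterion: consecutive differences tend to zero. -/
lemma na_cauchySeq (hna : ∀ x y : K, ‖x + y‖ ≤ max ‖x‖ ‖y‖) (u : ℕ → K)
    (hu : Tendsto (fun n => u (n + 1) - u n) atTop (𝓝 0)) : CauchySeq u := by
  rw [Metric.cauchySeq_iff']
  intro ε hε
  obtain ⟨N, hN⟩ := (Metric.tendsto_nhds.mp hu ε hε).exists_forall_of_atTop
  refine ⟨N, fun n hn => ?_⟩
  rw [dist_eq_norm]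
  have : ∀ m, N ≤ m → ‖u m - u N‖ < ε := by
    intro m hm
    induction m with
    | zero => simpa [Nat.le_zero.mp hm] using hε
    | succ k ih =>
      rcases Nat.lt_or_ge N (k + 1) with hlt | hge
      · have hk : N ≤ k := Nat.lt_succ_iff.mp hlt
        have h1 : ‖u (k + 1) - u k‖ < ε := by
          have := hN k hk; rwa [dist_eq_norm, sub_zero] at this
        exact lt_of_le_of_lt (na_sub3 hna _ (u k) _) (max_lt h1 (ih hk))
      · have : N = k + 1 := le_antisymm hm hge
        simpa [this] using hε
  exact this n hn
end NA
open Finset Filter Topology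

section NA2
variable {K : Type*} [NormedField K]

lemma na_tail_bound (hna : ∀ x y : K, ‖x + y‖ ≤ max ‖x‖ ‖y‖)
    (h : ℕ → K) {δ : ℝ} (hδ0 : 0 ≤ δ) (hδ1 : δ ≤ 1) {N : ℕ}
    (htail : ∀ i, N ≤ i → ‖h i - 1‖ ≤ δ) {n : ℕ} (hn : N ≤ n) :
    ‖(∏ i ∈ range n, h i) - ∏ i ∈ range N, h i‖ ≤ ‖∏ i ∈ range N, h i‖ * δ := by
  have hsplit := Finset.prod_range_mul_prod_Ico h hn
  have hmem : ∀ i ∈ Ico N n, ‖h i - 1‖ ≤ δ := fun i hi => htail i (mem_Ico.mp hi).1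
  calc ‖(∏ i ∈ range n, h i) - ∏ i ∈ range N, h i‖
      = ‖∏ i ∈ range N, h i‖ * ‖(∏ i ∈ Ico N n, h i) - 1‖ := by
        rw [← norm_mul, mul_sub, mul_one, hsplit]
    _ ≤ ‖∏ i ∈ range N, h i‖ * δ :=
        mul_le_mul_of_nonneg_left (na_prod_sub_one hna hδ0 hδ1 _ h hmem) (norm_nonneg _)

lemma na_multipliable [CompleteSpace K] (hna : ∀ x y : K, ‖x + y‖ ≤ max ‖x‖ ‖y‖)
    (h : ℕ → K) (hh : Tendsto (fun i => h i - 1) atTop (𝓝 0)) : Multipliable h := by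
  have htend : ∀ δ : ℝ, 0 < δ → ∃ N, ∀ i, N ≤ i → ‖h i - 1‖ ≤ δ := by
    intro δ hδ
    obtain ⟨N, hN⟩ := (Metric.tendsto_nhds.mp hh δ hδ).exists_forall_of_atTop
    exact ⟨N, fun i hi => by have := hN i hi; rw [dist_eq_norm, sub_zero] at this; exact this.le⟩
  obtain ⟨N₁, hN₁⟩ := htend (1/2) (by norm_num)
  set s : ℕ → K := fun n => ∏ i ∈ range n, h i with hs
  set C : ℝ := max ‖s N₁‖ 1 with hCdef
  have hC1 : (1:ℝ) ≤ C := le_max_right _ _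
  have hC0 : (0:ℝ) < C := lt_of_lt_of_le one_pos hC1
  have hCs : ∀ n, N₁ ≤ n → ‖s n‖ ≤ C := by
    intro n hn
    have hsplit := Finset.prod_range_mul_prod_Ico h hn
    have : ‖s n‖ = ‖s N₁‖ * ‖∏ i ∈ Ico N₁ n, h i‖ := by rw [← norm_mul, hsplit]
    rw [this]
    calc ‖s N₁‖ * ‖∏ i ∈ Ico N₁ n, h i‖ ≤ ‖s N₁‖ * 1 := by
          refine mul_le_mul_of_nonneg_left ?_ (norm_nonneg _)
          exact na_prod_le_one hna (by norm_num) (by norm_num) _ h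
            (fun i hi => hN₁ i (mem_Ico.mp hi).1)
      _ ≤ C := by rw [mul_one]; exact le_max_left _ _
  have hcauchy : CauchySeq s := by
    rw [Metric.cauchySeq_iff']
    intro ε hε
    set δ : ℝ := min (ε / (2 * C)) (1/2) with hδdef
    have hδ0 : 0 < δ := lt_min (by positivity) (by norm_num)
    obtain ⟨N₂, hN₂⟩ := htend δ hδ0
    refine ⟨max N₁ N₂, fun n hn => ?_⟩
    rw [dist_eq_norm]
    have h1 : ‖s n - s (max N₁ N₂)‖ ≤ ‖s (max N₁ N₂)‖ * δ :=
      na_tail_bound hna h hδ0.le ((min_le_right _ _).trans (by norm_num))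
        (fun i hi => hN₂ i ((le_max_right N₁ N₂).trans hi)) hn
    have h2 : ‖s (max N₁ N₂)‖ * δ ≤ C * (ε / (2 * C)) :=
      mul_le_mul (hCs _ (le_max_left _ _)) (min_le_left _ _) hδ0.le hC0.le
    have h3 : C * (ε / (2 * C)) < ε := by
      rw [mul_div_assoc', div_lt_iff₀ (by positivity : (0:ℝ) < 2 * C)]
      nlinarith
    exact lt_of_le_of_lt (h1.trans h2) h3
  obtain ⟨a, ha⟩ := cauchySeq_tendsto_of_complete hcauchy
  refine ⟨a, ?_⟩
  rw [HasProd, Metric.tendsto_nhds]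
  intro ε hε
  set δ : ℝ := min (ε / (2 * (C + 1))) (1/2) with hδdef
  have hδ0 : 0 < δ := lt_min (by positivity) (by norm_num)
  obtain ⟨N₂, hN₂⟩ := htend δ hδ0
  obtain ⟨N₃, hN₃a, hN₃⟩ : ∃ N₃, max N₁ N₂ ≤ N₃ ∧ dist (s N₃) a < ε / 2 := by
    obtain ⟨N₃, hN₃⟩ := ((Metric.tendsto_nhds.mp ha (ε/2) (by positivity)).and
      (eventually_ge_atTop (max N₁ N₂))).exists_forall_of_atTop
    exact ⟨max N₃ (max N₁ N₂), (hN₃ _ (le_max_left _ _)).2, (hN₃ _ (le_max_left _ _)).1⟩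
  rw [SummationFilter.unconditional_filter, eventually_atTop]
  refine ⟨range N₃, fun S hS => ?_⟩
  have hsdiff : (∏ i ∈ S \ range N₃, h i) * ∏ i ∈ range N₃, h i = ∏ i ∈ S, h i :=
    Finset.prod_sdiff hS
  have hkey : ‖(∏ i ∈ S, h i) - s N₃‖ ≤ ‖s N₃‖ * δ := by
    have hmem : ∀ i ∈ S \ range N₃, ‖h i - 1‖ ≤ δ := by
      intro i hi
      have : N₃ ≤ i := by
        have := (Finset.mem_sdiff.mp hi).2
        simpa [Finset.mem_range, not_lt] using this
      exact hN₂ i (((le_max_right N₁ N₂).trans hN₃a).trans this)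
    calc ‖(∏ i ∈ S, h i) - s N₃‖ = ‖s N₃‖ * ‖(∏ i ∈ S \ range N₃, h i) - 1‖ := by
          rw [← norm_mul, mul_sub, mul_one, mul_comm, hsdiff]
      _ ≤ ‖s N₃‖ * δ := mul_le_mul_of_nonneg_left
          (na_prod_sub_one hna hδ0.le ((min_le_right _ _).trans (by norm_num)) _ h hmem)
          (norm_nonneg _)
  have hsC : ‖s N₃‖ ≤ C := hCs _ ((le_max_left N₁ N₂).trans hN₃a)
  have : ‖s N₃‖ * δ < ε / 2 := by
    have h2 : ‖s N₃‖ * δ ≤ C * (ε / (2 * (C + 1))) :=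
      mul_le_mul hsC (min_le_left _ _) hδ0.le hC0.le
    refine h2.trans_lt ?_
    rw [mul_div_assoc', div_lt_div_iff₀ (by positivity) (by norm_num : (0:ℝ) < 2)]
    nlinarith
  calc dist (∏ i ∈ S, h i) a ≤ dist (∏ i ∈ S, h i) (s N₃) + dist (s N₃) a := dist_triangle _ _ _
    _ < ε / 2 + ε / 2 := by
        refine add_lt_add_of_lt_of_lt ?_ hN₃
        rw [dist_eq_norm]; exact lt_of_le_of_lt hkey this
    _ = ε := by ring

lemma na_norm_tprod [CompleteSpace K] (hna : ∀ x y : K, ‖x + y‖ ≤ max ‖x‖ ‖y‖)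
    (h : ℕ → K) (hm : Multipliable h) {N : ℕ} {δ : ℝ} (hδ : δ < 1)
    (htail : ∀ i, N ≤ i → ‖h i - 1‖ ≤ δ) : ‖∏' i, h i‖ = ‖∏ i ∈ range N, h i‖ := by
  have hδ0 : 0 ≤ δ := le_trans (norm_nonneg _) (htail N le_rfl)
  have ht := hm.hasProd.tendsto_prod_nat
  have hconst : ∀ n, N ≤ n → ‖∏ i ∈ range n, h i‖ = ‖∏ i ∈ range N, h i‖ := by
    intro n hn
    have hsplit := Finset.prod_range_mul_prod_Ico h hn
    have h1 : ‖(∏ i ∈ Ico N n, h i)‖ = 1 := by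
      refine na_one_sub hna (lt_of_le_of_lt ?_ hδ)
      exact na_prod_sub_one hna hδ0 hδ.le _ h (fun i hi => htail i (mem_Ico.mp hi).1)
    rw [← hsplit, norm_mul, h1, mul_one]
  have h2 : Tendsto (fun n => ‖∏ i ∈ range n, h i‖) atTop (𝓝 ‖∏ i ∈ range N, h i‖) := by
    refine tendsto_const_nhds.congr' ?_
    filter_upwards [eventually_ge_atTop N] with n hn
    exact (hconst n hn).symm
  exact tendsto_nhds_unique ht.norm h2
end NA2

section SOE
variable {K : Type*} [NormedField K]

/-- A "second-order estimate" pair on the closed ball of radius `ρ`: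
`f` is bounded by `G`, `L` is a derivative candidate bounded by `G/ρ`,
with quadratic Taylor error `G/ρ²`. -/
structure SOE (ρ G : ℝ) (f L : K → K) : Prop where
  bound : ∀ z : K, ‖z‖ ≤ ρ → ‖f z‖ ≤ G
  dbound : ∀ z : K, ‖z‖ ≤ ρ → ‖L z‖ * ρ ≤ G
  taylor : ∀ y z : K, ‖y‖ ≤ ρ → ‖z‖ ≤ ρ →
    ‖f z - f y - L y * (z - y)‖ * ρ ^ 2 ≤ G * ‖z - y‖ ^ 2

namespace SOE

variable {ρ G G₁ G₂ : ℝ} {f L f₁ L₁ f₂ L₂ : K → K}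

lemma G_nonneg (hρ : 0 ≤ ρ) (h : SOE ρ G f L) : 0 ≤ G :=
  le_trans (norm_nonneg (f 0)) (h.bound 0 (by simpa using hρ))

lemma mono (hG : G ≤ G') (h : SOE ρ G f L) : SOE ρ G' f L where
  bound z hz := (h.bound z hz).trans hG
  dbound z hz := (h.dbound z hz).trans hG
  taylor y z hy hz := (h.taylor y z hy hz).trans
    (mul_le_mul_of_nonneg_right hG (by positivity))

lemma norm_sub_le (hna : ∀ x y : K, ‖x + y‖ ≤ max ‖x‖ ‖y‖) {y z : K}
    (hy : ‖y‖ ≤ ρ) (hz : ‖z‖ ≤ ρ) : ‖z - y‖ ≤ ρ :=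
  (na_sub_le hna z y).trans (max_le hz hy)

lemma lip (hna : ∀ x y : K, ‖x + y‖ ≤ max ‖x‖ ‖y‖) (hρ : 0 < ρ) (h : SOE ρ G f L)
    {y z : K} (hy : ‖y‖ ≤ ρ) (hz : ‖z‖ ≤ ρ) : ‖f z - f y‖ * ρ ≤ G * ‖z - y‖ := by
  have ht : ‖z - y‖ ≤ ρ := norm_sub_le hna hy hz
  have hsplit : f z - f y = (f z - f y - L y * (z - y)) + L y * (z - y) := by ring
  have h1 : ‖f z - f y‖ ≤ max ‖f z - f y - L y * (z - y)‖ (‖L y‖ * ‖z - y‖) := by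
    rw [hsplit]; simpa [norm_mul] using hna (f z - f y - L y * (z - y)) (L y * (z - y))
  rcases le_max_iff.mp h1 with h2 | h2
  · have h3 := h.taylor y z hy hz
    have h4 : ‖f z - f y‖ * ρ ^ 2 ≤ G * ‖z - y‖ ^ 2 :=
      le_trans (mul_le_mul_of_nonneg_right h2 (by positivity)) h3
    have hGn := h.G_nonneg hρ.le
    have h5 : (‖f z - f y‖ * ρ) * ρ ≤ (G * ‖z - y‖) * ρ := by
      calc (‖f z - f y‖ * ρ) * ρ = ‖f z - f y‖ * ρ ^ 2 := by ring
        _ ≤ G * ‖z - y‖ ^ 2 := h4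
        _ = (G * ‖z - y‖) * ‖z - y‖ := by ring
        _ ≤ (G * ‖z - y‖) * ρ := mul_le_mul_of_nonneg_left ht (by positivity)
    exact le_of_mul_le_mul_right h5 hρ
  · have h3 := h.dbound y hy
    have h4 : ‖f z - f y‖ * ρ ≤ (‖L y‖ * ρ) * ‖z - y‖ := by
      calc ‖f z - f y‖ * ρ ≤ (‖L y‖ * ‖z - y‖) * ρ :=
            mul_le_mul_of_nonneg_right h2 hρ.le
        _ = (‖L y‖ * ρ) * ‖z - y‖ := by ring
    exact h4.trans (mul_le_mul_of_nonneg_right h3 (norm_nonneg _))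

lemma Llip (hρ : 0 < ρ) (h : SOE ρ G f L)
    {x y : K} (hx : ‖x‖ ≤ ρ) (hy : ‖y‖ ≤ ρ)
    (hna : ∀ x y : K, ‖x + y‖ ≤ max ‖x‖ ‖y‖) :
    ‖L x - L y‖ * ρ ^ 2 ≤ G * ‖x - y‖ := by
  rcases eq_or_ne x y with rfl | hxy
  · simpa using mul_nonneg (h.G_nonneg hρ.le) (norm_nonneg _)
  have ht : (0:ℝ) < ‖x - y‖ := by simpa [norm_pos_iff, sub_eq_zero] using hxy
  have hA := h.taylor y x hy hx
  have hB := h.taylor x y hx hy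
  have hid : (L x - L y) * (x - y) =
      (f x - f y - L y * (x - y)) + (f y - f x - L x * (y - x)) := by ring
  have h1 : ‖(L x - L y) * (x - y)‖ * ρ ^ 2 ≤ G * ‖x - y‖ ^ 2 := by
    rw [hid]
    refine le_trans (mul_le_mul_of_nonneg_right (hna _ _) (by positivity)) ?_
    rw [norm_sub_rev y x] at hB
    rcases max_cases ‖f x - f y - L y * (x - y)‖ ‖f y - f x - L x * (y - x)‖ with
        ⟨he, _⟩ | ⟨he, _⟩ <;> rw [he]
    · exact hA
    · exact hB
  rw [norm_mul] at h1
  have h2 : (‖L x - L y‖ * ρ ^ 2) * ‖x - y‖ ≤ (G * ‖x - y‖) * ‖x - y‖ := by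
    calc (‖L x - L y‖ * ρ ^ 2) * ‖x - y‖ = ‖L x - L y‖ * ‖x - y‖ * ρ ^ 2 := by ring
      _ ≤ G * ‖x - y‖ ^ 2 := h1
      _ = (G * ‖x - y‖) * ‖x - y‖ := by ring
  exact le_of_mul_le_mul_right h2 ht

lemma ofConst {a : K} (hρ : 0 ≤ ρ) (ha : ‖a‖ ≤ G) : SOE ρ G (fun _ => a) (fun _ => 0) where
  bound _ _ := ha
  dbound _ _ := by simpa using (norm_nonneg a).trans ha
  taylor y z _ _ := by
    have hG : 0 ≤ G := (norm_nonneg a).trans ha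
    simp only [sub_self, zero_mul, sub_zero, norm_zero]
    positivity

lemma ofAffine (hna : ∀ x y : K, ‖x + y‖ ≤ max ‖x‖ ‖y‖) {a b : K}
    (ha : ‖a‖ ≤ G) (hb : ‖b‖ * ρ ≤ G) :
    SOE ρ G (fun z => a + b * z) (fun _ => b) where
  bound z hz := by
    refine (hna a (b * z)).trans (max_le ha ?_)
    rw [norm_mul]
    exact (mul_le_mul_of_nonneg_left hz (norm_nonneg b)).trans hb
  dbound _ _ := hb
  taylor y z _ _ := by
    have hG : 0 ≤ G := (norm_nonneg a).trans ha
    have : a + b * z - (a + b * y) - b * (z - y) = 0 := by ring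
    rw [this, norm_zero, zero_mul]
    positivity

lemma mul (hna : ∀ x y : K, ‖x + y‖ ≤ max ‖x‖ ‖y‖) (hρ : 0 < ρ)
    (h₁ : SOE ρ G₁ f₁ L₁) (h₂ : SOE ρ G₂ f₂ L₂) :
    SOE ρ (G₁ * G₂) (fun z => f₁ z * f₂ z)
      (fun y => f₁ y * L₂ y + f₂ y * L₁ y) where
  bound z hz := by
    rw [norm_mul]
    exact mul_le_mul (h₁.bound z hz) (h₂.bound z hz) (norm_nonneg _) (h₁.G_nonneg hρ.le)
  dbound z hz := by
    refine le_trans (mul_le_mul_of_nonneg_right (hna _ _) hρ.le) ?_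
    rw [max_mul_of_nonneg _ _ hρ.le]
    refine max_le ?_ ?_
    · rw [norm_mul]
      calc ‖f₁ z‖ * ‖L₂ z‖ * ρ = ‖f₁ z‖ * (‖L₂ z‖ * ρ) := by ring
        _ ≤ G₁ * G₂ := mul_le_mul (h₁.bound z hz) (h₂.dbound z hz)
            (by positivity) (h₁.G_nonneg hρ.le)
    · rw [norm_mul]
      calc ‖f₂ z‖ * ‖L₁ z‖ * ρ = ‖f₂ z‖ * (‖L₁ z‖ * ρ) := by ring
        _ ≤ G₂ * G₁ := mul_le_mul (h₂.bound z hz) (h₁.dbound z hz)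
            (by positivity) (h₂.G_nonneg hρ.le)
        _ = G₁ * G₂ := mul_comm _ _
  taylor y z hy hz := by
    have hG₁ := h₁.G_nonneg hρ.le
    have hG₂ := h₂.G_nonneg hρ.le
    set t := ‖z - y‖ with htdef
    have ht0 : 0 ≤ t := norm_nonneg _
    have hid : f₁ z * f₂ z - f₁ y * f₂ y - (f₁ y * L₂ y + f₂ y * L₁ y) * (z - y)
        = f₁ z * (f₂ z - f₂ y - L₂ y * (z - y))
          + (((f₁ z - f₁ y) * L₂ y) * (z - y)
          + f₂ y * (f₁ z - f₁ y - L₁ y * (z - y))) := by ring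
    rw [hid]
    refine le_trans (mul_le_mul_of_nonneg_right
      ((hna _ _).trans (max_le_max le_rfl (hna _ _))) (by positivity)) ?_
    rw [max_mul_of_nonneg _ _ (by positivity : (0:ℝ) ≤ ρ ^ 2),
      max_mul_of_nonneg _ _ (by positivity : (0:ℝ) ≤ ρ ^ 2)]
    refine max_le ?_ (max_le ?_ ?_)
    · rw [norm_mul]
      calc ‖f₁ z‖ * ‖f₂ z - f₂ y - L₂ y * (z - y)‖ * ρ ^ 2
          = ‖f₁ z‖ * (‖f₂ z - f₂ y - L₂ y * (z - y)‖ * ρ ^ 2) := by ring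
        _ ≤ G₁ * (G₂ * t ^ 2) := mul_le_mul (h₁.bound z hz) (h₂.taylor y z hy hz)
            (by positivity) hG₁
        _ = G₁ * G₂ * t ^ 2 := by ring
    · rw [norm_mul, norm_mul]
      have hl := h₁.lip hna hρ hy hz
      have hd := h₂.dbound y hy
      calc ‖f₁ z - f₁ y‖ * ‖L₂ y‖ * t * ρ ^ 2
          = (‖f₁ z - f₁ y‖ * ρ) * (‖L₂ y‖ * ρ) * t := by ring
        _ ≤ (G₁ * t) * G₂ * t := by
            refine mul_le_mul_of_nonneg_right ?_ ht0
            exact mul_le_mul hl hd (by positivity) (by positivity)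
        _ = G₁ * G₂ * t ^ 2 := by ring
    · rw [norm_mul]
      calc ‖f₂ y‖ * ‖f₁ z - f₁ y - L₁ y * (z - y)‖ * ρ ^ 2
          = ‖f₂ y‖ * (‖f₁ z - f₁ y - L₁ y * (z - y)‖ * ρ ^ 2) := by ring
        _ ≤ G₂ * (G₁ * t ^ 2) := mul_le_mul (h₂.bound y hy) (h₁.taylor y z hy hz)
            (by positivity) hG₂
        _ = G₁ * G₂ * t ^ 2 := by ring

lemma ofLim {F Λ : K → K} {fs Ls : ℕ → K → K}
    (hn : ∀ n, SOE ρ G (fs n) (Ls n))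
    (hf : ∀ z : K, ‖z‖ ≤ ρ → Tendsto (fun n => fs n z) atTop (𝓝 (F z)))
    (hL : ∀ z : K, ‖z‖ ≤ ρ → Tendsto (fun n => Ls n z) atTop (𝓝 (Λ z))) :
    SOE ρ G F Λ where
  bound z hz := le_of_tendsto (hf z hz).norm (Eventually.of_forall fun n => (hn n).bound z hz)
  dbound z hz := le_of_tendsto ((hL z hz).norm.mul_const ρ)
    (Eventually.of_forall fun n => (hn n).dbound z hz)
  taylor y z hy hz := by
    have htt : Tendsto (fun n => ‖fs n z - fs n y - Ls n y * (z - y)‖ * ρ ^ 2) atTop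
        (𝓝 (‖F z - F y - Λ y * (z - y)‖ * ρ ^ 2)) := by
      exact ((((hf z hz).sub (hf y hy)).sub ((hL y hy).mul_const (z - y))).norm).mul_const _
    exact le_of_tendsto htt
      (Eventually.of_forall fun n => (hn n).taylor y z hy hz)

lemma hasDerivAt {K : Type*} [NontriviallyNormedField K] {ρ G : ℝ} {f L : K → K}
    (hna : ∀ x y : K, ‖x + y‖ ≤ max ‖x‖ ‖y‖) (hρ : 0 < ρ)
    (h : SOE ρ G f L) {y : K} (hy : ‖y‖ ≤ ρ) : HasDerivAt f (L y) y := by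
  have hGn := h.G_nonneg hρ.le
  rw [hasDerivAt_iff_isLittleO]
  rw [Asymptotics.isLittleO_iff]
  intro C hC
  rw [Metric.eventually_nhds_iff]
  refine ⟨min ρ (C * ρ ^ 2 / (G + 1)), lt_min hρ (by positivity), fun {z} hd => ?_⟩
  rw [dist_eq_norm] at hd
  have ht1 : ‖z - y‖ < ρ := lt_of_lt_of_le hd (min_le_left _ _)
  have ht2 : ‖z - y‖ ≤ C * ρ ^ 2 / (G + 1) := (le_of_lt hd).trans (min_le_right _ _)
  have hz : ‖z‖ ≤ ρ := by
    have : ‖z‖ = ‖y + (z - y)‖ := by ring_nf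
    rw [this]
    exact (hna _ _).trans (max_le hy ht1.le)
  have h1 := h.taylor y z hy hz
  have h2 : (G + 1) * ‖z - y‖ ≤ C * ρ ^ 2 := by
    rw [le_div_iff₀ (by positivity : (0:ℝ) < G + 1)] at ht2
    rw [mul_comm]
    exact ht2
  have key : ‖f z - f y - L y * (z - y)‖ * ρ ^ 2 ≤ (C * ‖z - y‖) * ρ ^ 2 := by
    calc ‖f z - f y - L y * (z - y)‖ * ρ ^ 2 ≤ G * ‖z - y‖ ^ 2 := h1
      _ ≤ ((G + 1) * ‖z - y‖) * ‖z - y‖ := by nlinarith [norm_nonneg (z - y)]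
      _ ≤ (C * ρ ^ 2) * ‖z - y‖ := mul_le_mul_of_nonneg_right h2 (norm_nonneg _)
      _ = (C * ‖z - y‖) * ρ ^ 2 := by ring
  have := le_of_mul_le_mul_right (by simpa [mul_comm] using key) (by positivity : (0:ℝ) < ρ ^ 2)
  simpa [smul_eq_mul, mul_comm] using this

end SOE
end SOE

section Main
variable {K : Type*} [NontriviallyNormedField K]

/-- Multipliability of the products defining `f_c`. -/
lemma main_multipliable (hcomp : CompleteSpace K)
    (hna : ∀ x y : K, ‖x + y‖ ≤ max ‖x‖ ‖y‖)
    (R : ℕ → ℝ) (hRtop : Tendsto R atTop atTop)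
    (c : ℕ → K) (hc : ∀ j, 1 ≤ j → ‖c j‖ = R j)
    (z : K) (g : ℕ → K) (hg : ∀ i, g i = 1 ∨ g i = 1 - z / c (i + 1)) :
    Multipliable g := by
  haveI := hcomp
  refine na_multipliable hna g ?_
  rw [tendsto_zero_iff_norm_tendsto_zero]
  have hb : ∀ i : ℕ, ‖g i - 1‖ ≤ ‖z‖ * ‖c (i + 1)‖⁻¹ := by
    intro i
    rcases hg i with h | h <;> rw [h]
    · simp; positivity
    · rw [show (1:K) - z / c (i+1) - 1 = -(z / c (i+1)) by ring, norm_neg, norm_div,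
        div_eq_mul_inv]
  have hctop : Tendsto (fun i : ℕ => ‖c (i + 1)‖) atTop atTop := by
    have : ∀ᶠ i : ℕ in atTop, R (i + 1) = ‖c (i + 1)‖ := by
      filter_upwards [eventually_ge_atTop 0] with i _
      exact (hc (i + 1) (Nat.le_add_left 1 i)).symm
    exact Tendsto.congr' this (hRtop.comp (tendsto_add_atTop_nat 1))
  have h0 : Tendsto (fun i : ℕ => ‖z‖ * ‖c (i + 1)‖⁻¹) atTop (𝓝 0) := by
    simpa using (hctop.inv_tendsto_atTop).const_mul ‖z‖
  exact squeeze_zero (fun i => norm_nonneg _) hb h0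

/-- Every classical fixed point lies in one of the disks. -/
lemma main_part1 (hcomp : CompleteSpace K)
    (hna : ∀ x y : K, ‖x + y‖ ≤ max ‖x‖ ‖y‖)
    (p : ℕ) (hp : 2 ≤ p) (hpK : ‖(p : K)‖ = (p : ℝ)⁻¹)
    (R : ℕ → ℝ) (hRmono : ∀ i j, 1 ≤ i → i < j → R i < R j)
    (hR1 : (p : ℝ) < R 1) (hRtop : Tendsto R atTop atTop)
    (c : ℕ → K) (hc : ∀ j, 1 ≤ j → ‖c j‖ = R j)
    (z : K) (hz : fc p c z = z) : z ∈ ⋃ j : ℕ, Bset R c j := by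
  haveI := hcomp
  by_contra hmem
  simp only [Set.mem_iUnion, not_exists] at hmem
  have h0 : (1:ℝ) ≤ ‖z‖ := by
    have h' := hmem 0
    simp only [Bset, Set.mem_setOf_eq, not_lt] at h'
    simpa using h'
  have hB : ∀ j, 1 ≤ j → R j ≤ ‖z - c j‖ := by
    intro j hj
    have := hmem j
    simp only [Bset, if_neg (by omega : j ≠ 0), Set.mem_setOf_eq, not_lt] at this
    exact this
  have hRpos : ∀ i, 1 ≤ i → 0 < R i := by
    intro i hi
    have h2 : (0:ℝ) < R 1 := lt_trans (by positivity) hR1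
    rcases eq_or_lt_of_le hi with h | h
    · rwa [← h]
    · exact h2.trans (hRmono 1 i le_rfl h)
  have hRle : ∀ i j, 1 ≤ i → i ≤ j → R i ≤ R j := by
    intro i j hi hij
    rcases eq_or_lt_of_le hij with h | h
    · rw [h]
    · exact (hRmono i j hi h).le
  -- choose a cutoff for the tail
  obtain ⟨N₀, hN₀⟩ := (hRtop.eventually_gt_atTop ‖z‖).exists_forall_of_atTop
  set N := max N₀ 1 with hN
  have hN1 : 1 ≤ N := le_max_right _ _
  have hNgt : ∀ i, N ≤ i → ‖z‖ < R i := fun i hi => hN₀ i ((le_max_left _ _).trans hi)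
  set h : ℕ → K := fun i => 1 - z / c (i + 1) with hh
  have hmult : Multipliable h :=
    main_multipliable hcomp hna R hRtop c hc z h (fun i => Or.inr rfl)
  set δ : ℝ := ‖z‖ / R (N + 1) with hδ
  have hRN1 : 0 < R (N + 1) := hRpos _ (by omega)
  have hδ1 : δ < 1 := by
    rw [hδ, div_lt_one hRN1]
    exact hNgt (N + 1) (Nat.le_succ N)
  have htail : ∀ i, N ≤ i → ‖h i - 1‖ ≤ δ := by
    intro i hi
    have hci : ‖c (i + 1)‖ = R (i + 1) := hc _ (by omega)
    have : ‖h i - 1‖ = ‖z‖ / R (i + 1) := by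
      rw [hh]
      simp only []
      rw [show (1:K) - z / c (i+1) - 1 = -(z / c (i+1)) by ring, norm_neg, norm_div, hci]
    rw [this, hδ]
    exact div_le_div_of_nonneg_left (norm_nonneg z) hRN1 (hRle (N+1) (i+1) (by omega) (by omega))
  have hnormprod : ‖∏' i, h i‖ = ‖∏ i ∈ range N, h i‖ :=
    na_norm_tprod hna h hmult hδ1 htail
  have hfac : ∀ i, i < N → (1:ℝ) ≤ ‖h i‖ := by
    intro i _
    have hci : ‖c (i + 1)‖ = R (i + 1) := hc _ (by omega)
    have hcz : ‖c (i+1) - z‖ = ‖z - c (i+1)‖ := norm_sub_rev _ _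
    have hc0 : c (i + 1) ≠ 0 := by
      intro h0'
      rw [h0', norm_zero] at hci
      exact absurd hci.symm (ne_of_gt (hRpos _ (by omega)))
    have : h i = (c (i+1) - z) / c (i+1) := by
      rw [hh]
      field_simp
    rw [this, norm_div, hci, hcz]
    rw [le_div_iff₀ (hRpos _ (by omega))]
    simpa using hB (i+1) (by omega)
  have hprodge : (1:ℝ) ≤ ∏ i ∈ range N, ‖h i‖ := by
    calc (1:ℝ) = ∏ _i ∈ range N, (1:ℝ) := by simp
      _ ≤ ∏ i ∈ range N, ‖h i‖ :=
        Finset.prod_le_prod (by simp) (fun i hi => hfac i (mem_range.mp hi))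
  have hfcnorm : ‖fc p c z‖ = ‖z‖ ^ p * (p:ℝ) * ∏ i ∈ range N, ‖h i‖ := by
    rw [fc, norm_mul, norm_div, norm_pow, hpK, hnormprod, norm_prod,
      div_eq_mul_inv, inv_inv]
  have hgt : ‖z‖ < ‖fc p c z‖ := by
    rw [hfcnorm]
    have h1 : ‖z‖ ^ p * (p:ℝ) * 1 ≤ ‖z‖ ^ p * (p:ℝ) * ∏ i ∈ range N, ‖h i‖ := by
      refine mul_le_mul_of_nonneg_left hprodge (by positivity)
    have h2 : ‖z‖ < ‖z‖ ^ p * (p:ℝ) := by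
      have h3 : ‖z‖ ≤ ‖z‖ ^ p := le_self_pow₀ h0 (by omega)
      have hp2 : (2:ℝ) ≤ (p:ℝ) := by exact_mod_cast hp
      nlinarith [norm_nonneg z, h3, hp2, h0]
    calc ‖z‖ < ‖z‖ ^ p * (p:ℝ) := h2
      _ = ‖z‖ ^ p * (p:ℝ) * 1 := by ring
      _ ≤ _ := h1
  rw [hz] at hgt
  exact lt_irrefl _ hgt

/-- Value of `phi` at `R j`. -/
lemma main_phi (p : ℕ) (R : ℕ → ℝ)
    (hRmono : ∀ i j, 1 ≤ i → i < j → R i < R j) (j : ℕ) (hj : 1 ≤ j) :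
    phi p R (R j) = (p:ℝ) * (∏ i ∈ range (j-1), R (i+1))⁻¹ * R j ^ (p + j - 1) := by
  have hset : {k : ℕ | 1 ≤ k ∧ R j ≤ R k} = {k : ℕ | 1 ≤ k ∧ R j ≤ R k} := rfl
  have hmem : j ∈ {k : ℕ | 1 ≤ k ∧ R j ≤ R k} := ⟨hj, le_rfl⟩
  have hinf : sInf {k : ℕ | 1 ≤ k ∧ R j ≤ R k} = j := by
    refine le_antisymm (Nat.sInf_le hmem) ?_
    have hmem2 := Nat.sInf_mem (⟨j, hmem⟩ : {k : ℕ | 1 ≤ k ∧ R j ≤ R k}.Nonempty)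
    obtain ⟨h1, h2⟩ := hmem2
    by_contra hlt
    push_neg at hlt
    exact absurd h2 (not_le.mpr (hRmono _ j h1 hlt))
  have hIcc : ∏ i ∈ Icc 1 (j - 1), R i = ∏ i ∈ range (j - 1), R (i + 1) := by
    have hIco : Icc 1 (j - 1) = Ico 1 j := by
      ext x; simp [Nat.lt_iff_le_pred (by omega : 0 < j)]
    rw [hIco, Finset.prod_Ico_eq_prod_range]
    exact Finset.prod_congr rfl (fun i _ => by rw [Nat.add_comm])
  simp only [phi]
  rw [hinf, hIcc]
end Main

section Main2
variable {K : Type*} [NontriviallyNormedField K]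

lemma pow_soe (hna : ∀ x y : K, ‖x + y‖ ≤ max ‖x‖ ‖y‖) {ρ : ℝ} (hρ : 0 < ρ) (k : ℕ) :
    ∃ L : K → K, SOE ρ (ρ ^ k) (fun z : K => z ^ k) L := by
  induction k with
  | zero =>
    refine ⟨fun _ => 0, ?_⟩
    have h := SOE.ofConst (K := K) (ρ := ρ) (G := ρ ^ 0) (a := 1) hρ.le (by simp)
    have he : (fun _ : K => (1:K)) = fun z : K => z ^ 0 := by funext z; simp
    rwa [he] at h
  | succ k ih =>
    obtain ⟨Lk, hLk⟩ := ih
    have hid : SOE ρ ρ (fun z : K => 0 + 1 * z) (fun _ => 1) :=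
      SOE.ofAffine hna (by simp; positivity) (by simp)
    have hid' : SOE ρ ρ (fun z : K => z) (fun _ => 1) := by
      have he : (fun z : K => 0 + 1 * z) = fun z : K => z := by funext z; ring
      rwa [he] at hid
    have h := hLk.mul hna hρ hid'
    refine ⟨fun y => y ^ k * 1 + y * Lk y, ?_⟩
    have he : (fun z : K => z ^ k * z) = fun z : K => z ^ (k+1) := by
      funext z; rw [pow_succ]
    rw [he, ← pow_succ] at h
    exact h

set_option maxHeartbeats 1600000 in
lemma main_disk (hcomp : CompleteSpace K)
    (hna : ∀ x y : K, ‖x + y‖ ≤ max ‖x‖ ‖y‖)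
    (p : ℕ) (hp : 2 ≤ p) (hpK : ‖(p : K)‖ = (p : ℝ)⁻¹)
    (R : ℕ → ℝ) (hRmono : ∀ i j, 1 ≤ i → i < j → R i < R j)
    (hR1 : (p : ℝ) < R 1) (hRtop : Tendsto R atTop atTop)
    (c : ℕ → K) (hc : ∀ j, 1 ≤ j → ‖c j‖ = R j)
    (j : ℕ) (hj : 1 ≤ j) :
    (∃! w : K, ‖w - c j‖ < R j ∧ fc p c w = w) ∧
    (∀ w : K, ‖w - c j‖ < R j → fc p c w = w →
      ‖deriv (fc p c) w‖ = phi p R (R j) / R j ∧ 1 < phi p R (R j) / R j) := by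
  haveI := hcomp
  have hp1 : (1:ℝ) < (p:ℝ) := by exact_mod_cast (by omega : 1 < p)
  have hRpos : ∀ i, 1 ≤ i → 0 < R i := by
    intro i hi
    have h2 : (0:ℝ) < R 1 := lt_trans (by positivity) hR1
    rcases eq_or_lt_of_le hi with h | h
    · rwa [← h]
    · exact h2.trans (hRmono 1 i le_rfl h)
  have hRle : ∀ i k, 1 ≤ i → i ≤ k → R i ≤ R k := by
    intro i k hi hik
    rcases eq_or_lt_of_le hik with h | h
    · rw [h]
    · exact (hRmono i k hi h).le
  set ρ := R j with hρdef
  have hρ : 0 < ρ := hRpos j hj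
  have hρ1 : (1:ℝ) < ρ := lt_trans hp1 (hR1.trans_le (hRle 1 j le_rfl hj))
  have hcj : ‖c j‖ = ρ := hc j hj
  have hcj0 : c j ≠ 0 := by
    intro h0; rw [h0, norm_zero] at hcj; exact absurd hcj.symm (ne_of_gt hρ)
  set π := ∏ i ∈ range (j-1), R (i+1) with hπdef
  have hπpos : 0 < π := Finset.prod_pos (fun i _ => hRpos (i+1) (by omega))
  have hπρ : π ≤ ρ ^ (j-1) := by
    calc π ≤ ∏ _i ∈ range (j-1), ρ := by
          refine Finset.prod_le_prod (fun i _ => (hRpos (i+1) (by omega)).le) ?_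
          intro i hi
          exact hRle (i+1) j (by omega) (by have := mem_range.mp hi; omega)
      _ = ρ ^ (j-1) := by rw [Finset.prod_const, Finset.card_range]
  set lam := (p:ℝ) * ρ ^ p * ρ ^ (j-1) / (π * ρ) with hlamdef
  have hlam1 : 1 < lam := by
    rw [hlamdef, lt_div_iff₀ (by positivity)]
    have h1 : ρ ^ (j-1) * ρ ≤ ρ ^ p * ρ ^ (j-1) := by
      have h2 : ρ ≤ ρ ^ p := le_self_pow₀ hρ1.le (by omega)
      calc ρ ^ (j-1) * ρ ≤ ρ ^ (j - 1) * ρ ^ p := by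
            exact mul_le_mul_of_nonneg_left h2 (by positivity)
        _ = ρ ^ p * ρ ^ (j-1) := mul_comm _ _
    nlinarith [mul_le_mul_of_nonneg_right hπρ hρ.le, h1,
      mul_pos (pow_pos hρ p) (pow_pos hρ (j-1)), hp1]
  have hlampos : 0 < lam := lt_trans one_pos hlam1
  have hlamval : phi p R (R j) / R j = lam := by
    rw [main_phi p R hRmono j hj, hlamdef]
    have he : p + j - 1 = p + (j - 1) := by omega
    rw [he, pow_add, ← hπdef]
    field_simp
    rw [← hρdef]
    exact mul_inv_cancel_right₀ hρ.ne' _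
  -- the modified factors (factor `j` removed)
  set e : K → K := fun z => 1 - z / c j with hedef
  set h' : K → ℕ → K := fun z i => if i = j - 1 then 1 else 1 - z / c (i+1) with h'def
  set bfun : ℕ → K := fun i => if i = j - 1 then 0 else -(c (i+1))⁻¹ with hbdef
  set Ffin : ℕ → K → K := fun N z => z ^ p / (p:K) * ∏ i ∈ range N, h' z i with hFfindef
  set GF := lam * ρ with hGFdef
  have hGFval : GF = (p:ℝ) * ρ ^ p * (ρ ^ (j-1) / π) := by
    rw [hGFdef, hlamdef]; field_simp
  -- SOE for the monomial z^p/p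
  obtain ⟨Lm, hLm⟩ : ∃ Lm : K → K, SOE ρ ((p:ℝ) * ρ ^ p) (fun z : K => z ^ p / (p:K)) Lm := by
    obtain ⟨Lk, hLk⟩ := pow_soe hna hρ p
    have hcst : SOE ρ ((p:ℝ)⁻¹)⁻¹ (fun _ : K => ((p:K)⁻¹)) (fun _ => 0) := by
      refine SOE.ofConst hρ.le ?_
      rw [norm_inv, hpK, inv_inv]
    have h := hLk.mul hna hρ hcst
    refine ⟨fun y => y ^ p * 0 + (p:K)⁻¹ * Lk y, ?_⟩
    have he : (fun z : K => z ^ p * (p:K)⁻¹) = fun z : K => z ^ p / (p:K) := by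
      funext z; rw [div_eq_mul_inv]
    have hG : ρ ^ p * ((p:ℝ)⁻¹)⁻¹ = (p:ℝ) * ρ ^ p := by
      rw [inv_inv]; ring
    rw [he, hG] at h
    exact h
  -- SOE for the factors
  have hfactor : ∀ i : ℕ, SOE ρ (max 1 (ρ / R (i+1))) (fun z : K => h' z i) (fun _ => bfun i) := by
    intro i
    by_cases hi : i = j - 1
    · have he : (fun z : K => h' z i) = fun _ : K => (1:K) := by
        funext z; simp [h'def, hi]
      have hb : bfun i = 0 := by simp [hbdef, hi]
      rw [he, hb]
      exact SOE.ofConst hρ.le (by simp)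
    · have hci : ‖c (i+1)‖ = R (i+1) := hc (i+1) (by omega)
      have hc0 : c (i+1) ≠ 0 := by
        intro h0; rw [h0, norm_zero] at hci
        exact absurd hci.symm (ne_of_gt (hRpos (i+1) (by omega)))
      have h := SOE.ofAffine (K := K) (ρ := ρ) hna (a := 1) (b := -(c (i+1))⁻¹)
        (G := max 1 (ρ / R (i+1))) (by simp) ?_
      · have he : (fun z : K => 1 + -(c (i+1))⁻¹ * z) = fun z : K => h' z i := by
          funext z
          simp only [h'def, if_neg hi]
          field_simp
          ring
        have hb : (fun _ : K => -(c (i+1))⁻¹) = fun _ : K => bfun i := by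
          funext z; simp [hbdef, hi]
        rwa [he, hb] at h
      · rw [norm_neg, norm_inv, hci]
        refine le_max_of_le_right ?_
        rw [div_eq_inv_mul]
  -- SOE for the factors minus one
  have hfactm : ∀ i : ℕ, SOE ρ (ρ / R (i+1)) (fun z : K => h' z i - 1) (fun _ => bfun i) := by
    intro i
    have hRi : 0 < R (i+1) := hRpos (i+1) (by omega)
    by_cases hi : i = j - 1
    · have he : (fun z : K => h' z i - 1) = fun _ : K => (0:K) := by
        funext z; simp [h'def, hi]
      have hb : bfun i = 0 := by simp [hbdef, hi]
      rw [he, hb]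
      exact SOE.ofConst hρ.le (by simp; positivity)
    · have hci : ‖c (i+1)‖ = R (i+1) := hc (i+1) (by omega)
      have hc0 : c (i+1) ≠ 0 := by
        intro h0; rw [h0, norm_zero] at hci
        exact absurd hci.symm (ne_of_gt hRi)
      have h := SOE.ofAffine (K := K) (ρ := ρ) hna (a := 0) (b := -(c (i+1))⁻¹)
        (G := ρ / R (i+1)) (by simp; positivity) ?_
      · have he : (fun z : K => 0 + -(c (i+1))⁻¹ * z) = fun z : K => h' z i - 1 := by
          funext z
          simp only [h'def, if_neg hi]
          field_simp
          ring
        have hb : (fun _ : K => -(c (i+1))⁻¹) = fun _ : K => bfun i := by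
          funext z; simp [hbdef, hi]
        rwa [he, hb] at h
      · rw [norm_neg, norm_inv, hci, div_eq_inv_mul]
  -- recursive derivative candidates
  set Ls : ℕ → K → K := fun N => Nat.rec Lm
    (fun N LN => fun y => Ffin N y * bfun N + h' y N * LN y) N with hLsdef
  have hLs0 : Ls 0 = Lm := rfl
  have hLsS : ∀ N, Ls (N+1) = fun y => Ffin N y * bfun N + h' y N * Ls N y := fun N => rfl
  have hFfinSOE : ∀ N, SOE ρ ((p:ℝ) * ρ ^ p * ∏ i ∈ range N, max 1 (ρ / R (i+1)))
      (Ffin N) (Ls N) := by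
    intro N
    induction N with
    | zero =>
      have he : (fun z : K => z ^ p / (p:K)) = Ffin 0 := by
        funext z; simp [hFfindef]
      simp only [range_zero, Finset.prod_empty, mul_one]
      rw [← he]
      exact hLm
    | succ N ih =>
      have h := ih.mul hna hρ (hfactor N)
      have he : (fun z : K => Ffin N z * h' z N) = Ffin (N+1) := by
        funext z
        simp only [hFfindef, prod_range_succ]
        ring
      have hL : (fun y : K => Ffin N y * (fun _ : K => bfun N) y
          + (fun z : K => h' z N) y * Ls N y) = Ls (N+1) := by
        funext y
        rw [hLsS N]
      have hG : (p:ℝ) * ρ ^ p * (∏ i ∈ range N, max 1 (ρ / R (i+1))) * max 1 (ρ / R (N+1))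
          = (p:ℝ) * ρ ^ p * ∏ i ∈ range (N+1), max 1 (ρ / R (i+1)) := by
        rw [prod_range_succ]; ring
      rw [he, hL, hG] at h
      exact h
  have hGN : ∀ N, (p:ℝ) * ρ ^ p * ∏ i ∈ range N, max 1 (ρ / R (i+1)) ≤ GF := by
    intro N
    have hmax1 : ∀ i, j - 1 ≤ i → max 1 (ρ / R (i+1)) = 1 := by
      intro i hi
      refine max_eq_left ?_
      rw [div_le_one (hRpos (i+1) (by omega))]
      exact hRle j (i+1) hj (by omega)
    have hmax2 : ∀ i, i < j - 1 → max 1 (ρ / R (i+1)) = ρ / R (i+1) := by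
      intro i hi
      refine max_eq_right ?_
      rw [le_div_iff₀ (hRpos (i+1) (by omega)), one_mul]
      exact hRle (i+1) j (by omega) (by omega)
    have hval : ∏ i ∈ range (j-1), max 1 (ρ / R (i+1)) = ρ ^ (j-1) / π := by
      rw [Finset.prod_congr rfl (fun i hi => hmax2 i (mem_range.mp hi)),
        Finset.prod_div_distrib, Finset.prod_const, Finset.card_range, hπdef]
    have hprodle : ∏ i ∈ range N, max 1 (ρ / R (i+1)) ≤ ρ ^ (j-1) / π := by
      rcases le_total N (j-1) with hN | hN
      · rw [← hval]
        have hsplit := Finset.prod_range_mul_prod_Ico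
          (fun i => max 1 (ρ / R (i+1))) hN
        rw [← hsplit]
        refine le_mul_of_one_le_right ?_ ?_
        · exact Finset.prod_nonneg (fun i _ => le_trans zero_le_one (le_max_left _ _))
        · calc (1:ℝ) = ∏ _i ∈ Ico N (j-1), (1:ℝ) := by simp
            _ ≤ ∏ i ∈ Ico N (j-1), max 1 (ρ / R (i+1)) :=
              Finset.prod_le_prod (by simp) (fun i _ => le_max_left _ _)
      · have hsplit := Finset.prod_range_mul_prod_Ico
          (fun i => max 1 (ρ / R (i+1))) hN
        rw [← hsplit, hval]
        have h1 : ∏ i ∈ Ico (j-1) N, max 1 (ρ / R (i+1)) = 1 :=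
          Finset.prod_eq_one (fun i hi => hmax1 i (mem_Ico.mp hi).1)
        rw [h1, mul_one]
    calc (p:ℝ) * ρ ^ p * ∏ i ∈ range N, max 1 (ρ / R (i+1))
        ≤ (p:ℝ) * ρ ^ p * (ρ ^ (j-1) / π) :=
          mul_le_mul_of_nonneg_left hprodle (by positivity)
      _ = GF := hGFval.symm
  have hFfinSOE' : ∀ N, SOE ρ GF (Ffin N) (Ls N) := fun N => (hFfinSOE N).mono (hGN N)
  -- pointwise limits
  have hmult' : ∀ z : K, Multipliable (fun i => h' z i) := by
    intro z
    refine main_multipliable hcomp hna R hRtop c hc z _ (fun i => ?_)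
    by_cases hi : i = j - 1
    · left; simp [h'def, hi]
    · right; simp [h'def, hi]
  set F : K → K := fun z => z ^ p / (p:K) * ∏' i, h' z i with hFdef
  have hFlim : ∀ z : K, Tendsto (fun N => Ffin N z) atTop (𝓝 (F z)) := by
    intro z
    exact ((hmult' z).hasProd.tendsto_prod_nat).const_mul (z ^ p / (p:K))
  have hdiffSOE : ∀ N, SOE ρ (GF * (ρ / R (N+1)))
      (fun z => Ffin (N+1) z - Ffin N z) (fun y => Ls (N+1) y - Ls N y) := by
    intro N
    have h := (hFfinSOE' N).mul hna hρ (hfactm N)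
    have he : (fun z : K => Ffin N z * (h' z N - 1)) = fun z => Ffin (N+1) z - Ffin N z := by
      funext z
      simp only [hFfindef, prod_range_succ]
      ring
    have hL : (fun y : K => Ffin N y * (fun _ : K => bfun N) y
        + (fun z : K => h' z N - 1) y * Ls N y) = fun y => Ls (N+1) y - Ls N y := by
      funext y
      rw [hLsS N]
      ring
    rw [he, hL] at h
    exact h
  have hLdiff : ∀ y : K, ‖y‖ ≤ ρ → ∀ N, ‖Ls (N+1) y - Ls N y‖ ≤ GF / R (N+1) := by
    intro y hy N
    have h := (hdiffSOE N).dbound y hy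
    rw [show GF * (ρ / R (N+1)) = (GF / R (N+1)) * ρ from by ring] at h
    exact le_of_mul_le_mul_right h hρ
  have hLcau : ∀ y : K, ‖y‖ ≤ ρ → ∃ l : K, Tendsto (fun N => Ls N y) atTop (𝓝 l) := by
    intro y hy
    have hdt : Tendsto (fun N => Ls (N+1) y - Ls N y) atTop (𝓝 0) := by
      rw [tendsto_zero_iff_norm_tendsto_zero]
      refine squeeze_zero (fun n => norm_nonneg _) (fun n => hLdiff y hy n) ?_
      have h1 : Tendsto (fun N : ℕ => R (N+1)) atTop atTop :=
        hRtop.comp (tendsto_add_atTop_nat 1)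
      have h2 := h1.inv_tendsto_atTop.const_mul GF
      simpa [div_eq_mul_inv] using h2
    exact cauchySeq_tendsto_of_complete (na_cauchySeq hna _ hdt)
  have hex : ∀ y : K, ∃ l : K, ‖y‖ ≤ ρ → Tendsto (fun N => Ls N y) atTop (𝓝 l) := by
    intro y
    by_cases hy : ‖y‖ ≤ ρ
    · obtain ⟨l, hl⟩ := hLcau y hy; exact ⟨l, fun _ => hl⟩
    · exact ⟨0, fun h => absurd h hy⟩
  choose LF hLF using hex
  have hFSOE : SOE ρ GF F LF :=
    SOE.ofLim hFfinSOE' (fun z _ => hFlim z) (fun z hz => hLF z hz)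
  -- `fc = F * e`
  have hfcF : ∀ z : K, fc p c z = F z * e z := by
    intro z
    have hjs : j - 1 + 1 = j := by omega
    have hk : HasProd (fun i => if i = j - 1 then 1 - z / c (i+1) else 1) (e z) := by
      have h := hasProd_single (f := fun i => if i = j - 1 then 1 - z / c (i+1) else 1)
        (j - 1) (fun b hb => if_neg hb)
      simp only [if_pos rfl, hjs] at h
      exact h
    have hprodeq : (fun i : ℕ => 1 - z / c (i+1))
        = fun i => h' z i * (if i = j - 1 then 1 - z / c (i+1) else 1) := by
      funext i
      by_cases hi : i = j - 1 <;> simp [h'def, hi]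
    rw [fc]
    calc z ^ p / (p:K) * ∏' i, (1 - z / c (i+1))
        = z ^ p / (p:K) * ∏' i, (h' z i * (if i = j - 1 then 1 - z / c (i+1) else 1)) := by
          rw [← hprodeq]
      _ = z ^ p / (p:K) * ((∏' i, h' z i) * ∏' i, (if i = j - 1 then 1 - z / c (i+1) else 1)) := by
          rw [Multipliable.tprod_mul (hmult' z) hk.multipliable]
      _ = F z * e z := by
          rw [hk.tprod_eq, hFdef]
          ring
  set Lfc : K → K := fun y => F y * (-(c j)⁻¹) + e y * LF y with hLfcdef
  have heSOE : SOE ρ 1 e (fun _ => -(c j)⁻¹) := by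
    have h := SOE.ofAffine (K := K) (ρ := ρ) hna (a := 1) (b := -(c j)⁻¹) (G := 1)
      (by simp) ?_
    · have he' : (fun z : K => 1 + -(c j)⁻¹ * z) = e := by
        funext z; rw [hedef]; field_simp; ring
      rwa [he'] at h
    · rw [norm_neg, norm_inv, hcj, inv_mul_cancel₀ hρ.ne']
  have hfcSOE : SOE ρ GF (fc p c) Lfc := by
    have h := hFSOE.mul hna hρ heSOE
    have he1 : (fun z => F z * e z) = fc p c := funext fun z => (hfcF z).symm
    have he2 : (fun y : K => F y * (fun _ : K => -(c j)⁻¹) y + e y * LF y) = Lfc := by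
      funext y; rw [hLfcdef]
    rw [he1, he2, mul_one] at h
    exact h
  -- norm computations on the circle
  have hnormF : ∀ y : K, ‖y‖ = ρ → ‖F y‖ = lam * ρ := by
    intro y hy
    have hδ1 : ρ / R (j+1) < 1 := by
      rw [div_lt_one (hRpos (j+1) (by omega))]
      exact hRmono j (j+1) hj (by omega)
    have htail : ∀ i, j ≤ i → ‖h' y i - 1‖ ≤ ρ / R (j+1) := by
      intro i hi
      have hine : i ≠ j - 1 := by omega
      have hci : ‖c (i+1)‖ = R (i+1) := hc _ (by omega)
      have h1 : h' y i - 1 = -(y / c (i+1)) := by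
        rw [h'def]; simp only [if_neg hine]; ring
      rw [h1, norm_neg, norm_div, hci, hy]
      exact div_le_div_of_nonneg_left hρ.le (hRpos (j+1) (by omega))
        (hRle (j+1) (i+1) (by omega) (by omega))
    have hnp : ‖∏' i, h' y i‖ = ‖∏ i ∈ range j, h' y i‖ :=
      na_norm_tprod hna _ (hmult' y) hδ1 htail
    have hfac1 : ‖h' y (j-1)‖ = 1 := by simp [h'def]
    have hfac2 : ∀ i, i < j - 1 → ‖h' y i‖ = ρ / R (i+1) := by
      intro i hi
      have hine : i ≠ j - 1 := by omega
      have hci : ‖c (i+1)‖ = R (i+1) := hc _ (by omega)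
      have hgt : ‖(1:K)‖ < ‖-(y / c (i+1))‖ := by
        rw [norm_one, norm_neg, norm_div, hci, hy, lt_div_iff₀ (hRpos _ (by omega)), one_mul]
        exact hRmono (i+1) j (by omega) (by omega)
      have h1 : h' y i = 1 + -(y / c (i+1)) := by
        rw [h'def]; simp only [if_neg hine]; ring
      rw [h1, na_add_eq hna hgt, norm_neg, norm_div, hci, hy]
    have hprodnorm : ‖∏ i ∈ range j, h' y i‖ = ρ ^ (j-1) / π := by
      rw [norm_prod]
      have hsucc : j = (j-1) + 1 := by omega
      calc ∏ i ∈ range j, ‖h' y i‖ = ∏ i ∈ range ((j-1)+1), ‖h' y i‖ := by rw [← hsucc]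
        _ = (∏ i ∈ range (j-1), ‖h' y i‖) * ‖h' y (j-1)‖ := prod_range_succ _ _
        _ = (∏ i ∈ range (j-1), (ρ / R (i+1))) * 1 := by
            rw [hfac1, Finset.prod_congr rfl (fun i hi => hfac2 i (mem_range.mp hi))]
        _ = ρ ^ (j-1) / π := by
            rw [mul_one, Finset.prod_div_distrib, Finset.prod_const, Finset.card_range, hπdef]
    have hmon : ‖y ^ p / (p:K)‖ = ρ ^ p * (p:ℝ) := by
      rw [norm_div, norm_pow, hpK, hy, div_eq_mul_inv, inv_inv]
    have hFyn : ‖F y‖ = ‖y ^ p / (p:K)‖ * ‖∏' i, h' y i‖ := by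
      rw [hFdef, norm_mul]
    rw [hFyn, hmon, hnp, hprodnorm, hlamdef]
    field_simp
  set s := ρ / lam with hsdef
  have hs0 : 0 < s := div_pos hρ hlampos
  have hsρ : s < ρ := by
    rw [hsdef, div_lt_iff₀ hlampos]
    nlinarith
  have hslam : s * lam = ρ := by rw [hsdef]; field_simp
  have hnormy : ∀ w : K, ‖w - c j‖ < ρ → ‖w‖ = ρ := by
    intro w hw
    have h1 : ‖(w - c j) + c j‖ = ‖c j‖ := na_add_eq hna (by rw [hcj]; exact hw)
    simpa [hcj] using h1
  have hval : ∀ w : K, ‖w - c j‖ < ρ → ‖fc p c w‖ = lam * ‖w - c j‖ := by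
    intro w hw
    have hyρ := hnormy w hw
    have hev : e w = (c j - w) / c j := by rw [hedef]; field_simp
    have hen : ‖e w‖ = ‖w - c j‖ / ρ := by rw [hev, norm_div, norm_sub_rev, hcj]
    rw [hfcF w, norm_mul, hnormF w hyρ, hen]
    field_simp
  have hLFy : ∀ y : K, ‖y‖ ≤ ρ → ‖LF y‖ ≤ lam := by
    intro y hy
    have h := hFSOE.dbound y hy
    rw [hGFdef] at h
    exact le_of_mul_le_mul_right h hρ
  have hLfcval : ∀ y : K, ‖y - c j‖ ≤ s → ‖Lfc y‖ = lam := by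
    intro y hy
    have hyρ : ‖y‖ = ρ := hnormy y (lt_of_le_of_lt hy hsρ)
    have ht1 : ‖F y * (-(c j)⁻¹)‖ = lam := by
      rw [norm_mul, hnormF y hyρ, norm_neg, norm_inv, hcj]
      field_simp
    have hev : e y = (c j - y) / c j := by rw [hedef]; field_simp
    have hen : ‖e y‖ ≤ s / ρ := by
      rw [hev, norm_div, norm_sub_rev, hcj]
      gcongr
    have ht2 : ‖e y * LF y‖ < lam := by
      rw [norm_mul]
      calc ‖e y‖ * ‖LF y‖ ≤ (s/ρ) * lam :=
            mul_le_mul hen (hLFy y hyρ.le) (norm_nonneg _) (by positivity)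
        _ = (s * lam) / ρ := by ring
        _ = ρ / ρ := by rw [hslam]
        _ = 1 := div_self hρ.ne'
        _ < lam := hlam1
    have hsum : Lfc y = e y * LF y + F y * (-(c j)⁻¹) := by rw [hLfcdef]; ring
    rw [hsum, na_add_eq hna (by rw [ht1]; exact ht2), ht1]
  -- the fixed point map
  set μ := Lfc (c j) with hμdef
  have hμval : ‖μ‖ = lam := hLfcval (c j) (by rw [sub_self, norm_zero]; exact hs0.le)
  have hμ1 : ‖μ - 1‖ = lam := by
    have h1 : μ - 1 = -1 + μ := by ring
    rw [h1, na_add_eq hna (by rw [norm_neg, norm_one, hμval]; exact hlam1), hμval]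
  have hμ1ne : μ - 1 ≠ 0 := by
    intro h0
    rw [h0, norm_zero] at hμ1
    linarith
  set Φ : K → K := fun w => w - (fc p c w - w) / (μ - 1) with hΦdef
  have hΦapp : ∀ w : K, Φ w = w - (fc p c w - w) / (μ - 1) := fun _ => rfl
  have hΦiff : ∀ w : K, Φ w = w ↔ fc p c w = w := by
    intro w
    rw [hΦapp w]
    constructor
    · intro h
      have h2 : (fc p c w - w)/(μ - 1) = 0 := sub_eq_self.mp h
      rcases div_eq_zero_iff.mp h2 with h3 | h3
      · exact sub_eq_zero.mp h3
      · exact absurd h3 hμ1ne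
    · intro h; rw [h]; simp
  have hΦmem : ∀ w : K, ‖w - c j‖ ≤ s → ‖Φ w - c j‖ ≤ s := by
    intro w hw
    have hwρ : ‖w‖ = ρ := hnormy w (lt_of_le_of_lt hw hsρ)
    have h1 : ‖fc p c w - w‖ ≤ ρ := by
      refine (na_sub_le hna _ _).trans (max_le ?_ hwρ.le)
      rw [hval w (lt_of_le_of_lt hw hsρ)]
      calc lam * ‖w - c j‖ ≤ lam * s := mul_le_mul_of_nonneg_left hw hlampos.le
        _ = ρ := by rw [mul_comm]; exact hslam
    have h2 : ‖(fc p c w - w)/(μ-1)‖ ≤ s := by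
      rw [norm_div, hμ1, div_le_iff₀ hlampos, hslam]
      exact h1
    have h3 : Φ w - c j = (w - c j) - (fc p c w - w)/(μ-1) := by rw [hΦdef]; ring
    rw [h3]
    exact (na_sub_le hna _ _).trans (max_le hw h2)
  have hΦcontr : ∀ y z : K, ‖y - c j‖ ≤ s → ‖z - c j‖ ≤ s →
      ‖Φ z - Φ y‖ * lam ≤ ‖z - y‖ := by
    intro y z hy hz
    have hyρ : ‖y‖ = ρ := hnormy y (lt_of_le_of_lt hy hsρ)
    have hzρ : ‖z‖ = ρ := hnormy z (lt_of_le_of_lt hz hsρ)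
    have htzy : ‖z - y‖ ≤ s := by
      refine (na_sub3 hna z (c j) y).trans (max_le hz ?_)
      rw [norm_sub_rev]
      exact hy
    set E := fc p c z - fc p c y - Lfc y * (z - y) with hEdef
    have hE : ‖E‖ * ρ^2 ≤ (lam * ρ) * ‖z - y‖^2 := by
      have h := hfcSOE.taylor y z hyρ.le hzρ.le
      rwa [hGFdef] at h
    have h4 : lam * ‖z - y‖ ≤ ρ := by
      calc lam * ‖z - y‖ ≤ lam * s := mul_le_mul_of_nonneg_left htzy hlampos.le
        _ = ρ := by rw [mul_comm]; exact hslam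
    have hE' : ‖E‖ ≤ ‖z - y‖ := by
      have h5 : ‖E‖ * ρ^2 ≤ ‖z - y‖ * ρ^2 := by
        calc ‖E‖ * ρ^2 ≤ (lam * ρ) * ‖z-y‖^2 := hE
          _ = (lam * ‖z-y‖) * (ρ * ‖z-y‖) := by ring
          _ ≤ ρ * (ρ * ‖z-y‖) := by
              refine mul_le_mul_of_nonneg_right h4 ?_
              positivity
          _ = ‖z - y‖ * ρ^2 := by ring
      exact le_of_mul_le_mul_right h5 (by positivity)
    have hid : Φ z - Φ y = ((μ - Lfc y) * (z - y) - E) / (μ - 1) := by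
      rw [hΦdef, hEdef]
      field_simp
      ring
    have hLL : ‖μ - Lfc y‖ ≤ 1 := by
      have h6 := hfcSOE.Llip hρ (le_of_eq hcj) hyρ.le hna
      have h7 : GF * ‖c j - y‖ ≤ ρ^2 := by
        rw [hGFdef, norm_sub_rev]
        calc lam * ρ * ‖y - c j‖ ≤ lam * ρ * s := by
              refine mul_le_mul_of_nonneg_left hy ?_
              positivity
          _ = ρ^2 := by
              rw [show lam * ρ * s = (s * lam) * ρ from by ring, hslam]
              ring
      have h8 : ‖μ - Lfc y‖ * ρ^2 ≤ 1 * ρ^2 := by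
        rw [one_mul]
        exact (h6.trans h7)
      exact le_of_mul_le_mul_right h8 (by positivity)
    have hnum : ‖(μ - Lfc y) * (z - y) - E‖ ≤ ‖z - y‖ := by
      refine (na_sub_le hna _ _).trans (max_le ?_ hE')
      rw [norm_mul]
      calc ‖μ - Lfc y‖ * ‖z - y‖ ≤ 1 * ‖z - y‖ :=
            mul_le_mul_of_nonneg_right hLL (norm_nonneg _)
        _ = ‖z - y‖ := one_mul _
    rw [hid, norm_div, hμ1, div_mul_cancel₀ _ (ne_of_gt hlampos)]
    exact hnum
  -- Banach iteration
  set u : ℕ → K := fun n => Φ^[n] (c j) with hudef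
  have huS : ∀ n, u (n+1) = Φ (u n) := by
    intro n
    rw [hudef]
    exact Function.iterate_succ_apply' Φ n (c j)
  have hu0 : u 0 = c j := rfl
  have hu : ∀ n, ‖u n - c j‖ ≤ s := by
    intro n
    induction n with
    | zero => rw [hu0, sub_self, norm_zero]; exact hs0.le
    | succ n ih =>
      rw [huS n]
      exact hΦmem _ ih
  have hud : ∀ n, ‖u (n+1) - u n‖ ≤ s * (lam⁻¹)^n := by
    intro n
    induction n with
    | zero =>
      have h1 := hΦmem (c j) (by rw [sub_self, norm_zero]; exact hs0.le)
      rw [huS 0, hu0, pow_zero, mul_one]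
      exact h1
    | succ n ih =>
      have h2 := hΦcontr (u n) (u (n+1)) (hu n) (hu (n+1))
      rw [← huS n, ← huS (n+1)] at h2
      have h3 : ‖u (n+2) - u (n+1)‖ * lam ≤ s * lam⁻¹^n := h2.trans ih
      rw [show s * lam⁻¹^(n+1) = (s * lam⁻¹^n)/lam from by rw [pow_succ]; ring,
        le_div_iff₀ hlampos]
      exact h3
  obtain ⟨w, hw⟩ : ∃ w : K, Tendsto u atTop (𝓝 w) := by
    refine cauchySeq_tendsto_of_complete (na_cauchySeq hna u ?_)
    rw [tendsto_zero_iff_norm_tendsto_zero]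
    refine squeeze_zero (fun n => norm_nonneg _) hud ?_
    have h1 : Tendsto (fun n : ℕ => (lam⁻¹)^n) atTop (𝓝 0) := by
      refine tendsto_pow_atTop_nhds_zero_of_lt_one (by positivity) ?_
      rw [inv_lt_one_iff₀]
      right
      exact hlam1
    simpa using h1.const_mul s
  have hwmem : ‖w - c j‖ ≤ s := by
    have h1 : Tendsto (fun n => ‖u n - c j‖) atTop (𝓝 ‖w - c j‖) := (hw.sub_const (c j)).norm
    exact le_of_tendsto h1 (Eventually.of_forall hu)
  have hΦw : Φ w = w := by
    have hkey : ∀ n, ‖Φ w - w‖ ≤ max (lam⁻¹ * ‖w - u n‖) ‖u (n+1) - w‖ := by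
      intro n
      refine (na_sub3 hna (Φ w) (u (n+1)) w).trans (max_le_max ?_ le_rfl)
      rw [huS n]
      have h2 := hΦcontr (u n) w (hu n) hwmem
      rw [inv_mul_eq_div, le_div_iff₀ hlampos]
      exact h2
    have hwn : Tendsto (fun n => ‖w - u n‖) atTop (𝓝 0) := by
      have h3 := ((tendsto_const_nhds : Tendsto (fun _ : ℕ => w) atTop (𝓝 w)).sub hw).norm
      simpa using h3
    have hwn2 : Tendsto (fun n => ‖u (n+1) - w‖) atTop (𝓝 0) := by
      have h3 := ((hw.comp (tendsto_add_atTop_nat 1)).sub_const w).norm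
      simpa using h3
    have h0' : Tendsto (fun n => max (lam⁻¹ * ‖w - u n‖) ‖u (n+1) - w‖) atTop
        (𝓝 (max (lam⁻¹ * 0) 0)) := (Tendsto.const_mul _ hwn).max hwn2
    have h5 : ‖Φ w - w‖ ≤ max (lam⁻¹ * 0) 0 := ge_of_tendsto' h0' hkey
    have h6 : ‖Φ w - w‖ ≤ 0 := by simpa using h5
    have h7 : Φ w - w = 0 := norm_le_zero_iff.mp h6
    exact sub_eq_zero.mp h7
  have hfcw : fc p c w = w := (hΦiff w).mp hΦw
  have hfixmem : ∀ w' : K, ‖w' - c j‖ < ρ → fc p c w' = w' → ‖w' - c j‖ ≤ s := by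
    intro w' h1 h2
    have h3 : lam * ‖w' - c j‖ = ρ := by
      rw [← hval w' h1, h2]
      exact hnormy w' h1
    have h4 : ρ / lam = ‖w' - c j‖ := by
      rw [← h3]
      field_simp
    rw [hsdef, h4]
  have huniq : ∀ w1 w2 : K, ‖w1 - c j‖ ≤ s → ‖w2 - c j‖ ≤ s →
      fc p c w1 = w1 → fc p c w2 = w2 → w1 = w2 := by
    intro w1 w2 h1 h2 hf1 hf2
    have hΦ1 : Φ w1 = w1 := (hΦiff w1).mpr hf1
    have hΦ2 : Φ w2 = w2 := (hΦiff w2).mpr hf2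
    have h3 := hΦcontr w2 w1 h2 h1
    rw [hΦ1, hΦ2] at h3
    have h4 : ‖w1 - w2‖ = 0 := by nlinarith [norm_nonneg (w1 - w2)]
    exact sub_eq_zero.mp (norm_eq_zero.mp h4)
  constructor
  · refine ⟨w, ⟨lt_of_le_of_lt hwmem hsρ, hfcw⟩, ?_⟩
    rintro w' ⟨h1, h2⟩
    exact huniq w' w (hfixmem w' h1 h2) hwmem h2 hfcw
  · intro w' h1 h2
    have hmem' := hfixmem w' h1 h2
    have hD : HasDerivAt (fc p c) (Lfc w') w' :=
      hfcSOE.hasDerivAt hna hρ (le_of_eq (hnormy w' h1))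
    refine ⟨?_, ?_⟩
    · rw [hD.deriv, hlamval]
      exact hLfcval w' hmem'
    · rw [hlamval]
      exact hlam1
end Main2


/-- **Proposition 3.2** (fixed points). Every classical fixed point of `f_c` lies in some
disk `B_j` (`j ≥ 0`); each `B_j` with `j ≥ 1` contains exactly one fixed point, which is
repelling with multiplier of absolute value `φ(R_j)/R_j > 1`. -/
theorem fixed_points
    (p : ℕ) [Fact p.Prime] (K : Type*) [NontriviallyNormedField K] [Algebra ℚ_[p] K]
    (hK : IsCp p K) (R : ℕ → ℝ) (hR : IsGenericRadii p R)
    (c : ℕ → K) (hc : InC p R c) :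
    (∀ z : K, fc p c z = z → z ∈ ⋃ j : ℕ, Bset R c j) ∧
    (∀ j, 1 ≤ j →
      (∃! w : K, ‖w - c j‖ < R j ∧ fc p c w = w) ∧
      (∀ w : K, ‖w - c j‖ < R j → fc p c w = w →
        ‖deriv (fc p c) w‖ = phi p R (R j) / R j ∧ 1 < phi p R (R j) / R j)) := by
  obtain ⟨⟨hmono, hR1, hRtop⟩, -⟩ := hR
  have hcomp : CompleteSpace K := hK.complete
  have hna : ∀ x y : K, ‖x + y‖ ≤ max ‖x‖ ‖y‖ := hK.isNonarch
  have hp : 2 ≤ p := (Fact.out : p.Prime).two_le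
  have hpK : ‖(p : K)‖ = (p : ℝ)⁻¹ := by
    have h1 : ((p : ℕ) : K) = algebraMap ℚ_[p] K ((p : ℕ) : ℚ_[p]) :=
      (map_natCast (algebraMap ℚ_[p] K) p).symm
    rw [h1, hK.norm_extends]
    exact Padic.norm_p
  have hRmono : ∀ i j, 1 ≤ i → i < j → R i < R j := by
    intro i j hi hij
    induction j with
    | zero => omega
    | succ j ih =>
      rcases Nat.lt_or_ge i j with h | h
      · exact (ih h).trans (hmono j (by omega))
      · have he : i = j := by omega
        subst he
        exact hmono i hi
  have hcc : ∀ j, 1 ≤ j → ‖c j‖ = R j := hc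
  constructor
  · exact fun z hz => main_part1 hcomp hna p hp hpK R hRmono hR1 hRtop c hcc z hz
  · exact fun j hj => main_disk hcomp hna p hp hpK R hRmono hR1 hRtop c hcc j hj

end
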